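/- arXiv:2010.10756 — 2 statements merged into one kernel-verified Lean document; each statement's English description precedes it below -/
import Mathlib

section
/- For every real C > 0 and every ε > 0 there exists an integer D such that for every odd integer k ≥ 3, every integer d ≥ D and every integer ℓ with 0 ≤ ℓ ≤ C·√d and ℓ ≤ d, setting n = (2d+1)k − 1, one has |e_ℓ − e_0·exp(−kℓ²/(d(k−1)))| ≤ ε·e_0·exp(−kℓ²/(d(k−1))). (That is, e_ℓ ∼ e_0·exp(−kℓ²/(d(k−1))) for ℓ = O(√d) as n → ∞ with k = o(n).) -/
/-- `e_ℓ = C(n/2, d-ℓ)·C(n/2, d+ℓ)` (sizes of the classes of `2d`-sets). -/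
def ee (n d ℓ : ℕ) : ℕ := (n / 2).choose (d - ℓ) * (n / 2).choose (d + ℓ)

/-- `e*_ℓ = C(n/2, d-ℓ)·C(n/2, d+1+ℓ)` (sizes of the classes of `(2d+1)`-sets). -/
def es (n d ℓ : ℕ) : ℕ := (n / 2).choose (d - ℓ) * (n / 2).choose (d + 1 + ℓ)


lemma inv_one_add_ge (x : ℝ) (hx : 0 ≤ x) : Real.exp (-x) ≤ 1/(1+x) := by
  have h := Real.add_one_le_exp x
  rw [le_div_iff₀ (by linarith)]
  have : Real.exp (-x) * Real.exp x = 1 := by rw [← Real.exp_add]; simp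
  nlinarith [Real.exp_pos (-x)]

lemma one_sub_ge (x : ℝ) (h0 : 0 ≤ x) (h4 : x ≤ 1/4) : Real.exp (-x - 2*x^2) ≤ 1 - x := by
  have h1 : (0:ℝ) < 1 - x := by linarith
  have key : Real.exp (-(x/(1-x))) ≤ 1 - x := by
    have h := inv_one_add_ge (x/(1-x)) (by positivity)
    have hx : 1 + x/(1-x) = 1/(1-x) := by field_simp; ring
    rw [hx] at h
    simpa using h
  refine le_trans (Real.exp_le_exp.2 ?_) key
  have : x/(1-x) ≤ x + 2*x^2 := by
    rw [div_le_iff₀ h1]; nlinarith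
  linarith

lemma one_add_le (w : ℝ) (hw : 0 ≤ w) : 1/(1+w) ≤ Real.exp (-w + w^2) := by
  have h1 : (0:ℝ) < 1 + w := by linarith
  have key : 1/(1+w) ≤ Real.exp (-(w/(1+w))) := by
    have h := Real.add_one_le_exp (-(w/(1+w)))
    have hx : -(w/(1+w)) + 1 = 1/(1+w) := by field_simp; ring
    linarith
  refine key.trans (Real.exp_le_exp.2 ?_)
  have : w - w^2 ≤ w/(1+w) := by
    rw [le_div_iff₀ h1]; nlinarith
  linarith

lemma exp_merge (c X Y Z : ℝ) :
    (c * Real.exp X) * (Real.exp Y * Real.exp Z) = c * Real.exp (X + (Y + Z)) := by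
  rw [mul_assoc, ← Real.exp_add, ← Real.exp_add]

lemma ratio_bound (a x : ℝ) (ha : 1 ≤ a) (hx : 0 ≤ x) (hxa : 4*(x+1) ≤ a) :
    Real.exp (-(2*x+1)/a - 2*(x+1)^2/a^2) ≤ (a-x)/(a+x+1) ∧
    (a-x)/(a+x+1) ≤ Real.exp (-(2*x+1)/a + (x+1)^2/a^2) := by
  have ha0 : (0:ℝ) < a := by linarith
  have hv0 : 0 ≤ x/a := by positivity
  have hv4 : x/a ≤ 1/4 := by rw [div_le_iff₀ ha0]; linarith
  have hw0 : 0 ≤ (x+1)/a := by positivity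
  have heq : (a-x)/(a+x+1) = (1 - x/a) * (1/(1+(x+1)/a)) := by
    field_simp; ring
  have hid1 : -(x/a) - 2*(x/a)^2 + (-((x+1)/a)) = -(2*x+1)/a - 2*x^2/a^2 := by
    field_simp; ring
  have hid2 : -(x/a) + (-((x+1)/a) + ((x+1)/a)^2) = -(2*x+1)/a + (x+1)^2/a^2 := by
    field_simp; ring
  constructor
  · have l1 := one_sub_ge (x/a) hv0 hv4
    have l2 := inv_one_add_ge ((x+1)/a) hw0
    rw [heq]
    calc Real.exp (-(2*x+1)/a - 2*(x+1)^2/a^2)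
        ≤ Real.exp ((-(x/a) - 2*(x/a)^2) + (-((x+1)/a))) := by
          apply Real.exp_le_exp.2
          rw [hid1]
          have h2 : 2*x^2/a^2 ≤ 2*(x+1)^2/a^2 := by gcongr; nlinarith
          linarith
      _ = Real.exp (-(x/a) - 2*(x/a)^2) * Real.exp (-((x+1)/a)) := Real.exp_add _ _
      _ ≤ (1 - x/a) * (1/(1+(x+1)/a)) :=
          mul_le_mul l1 l2 (Real.exp_pos _).le (by linarith)
  · have l1 : 1 - x/a ≤ Real.exp (-(x/a)) := by linarith [Real.add_one_le_exp (-(x/a))]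
    have l2 := one_add_le ((x+1)/a) hw0
    rw [heq]
    calc (1 - x/a) * (1/(1+(x+1)/a))
        ≤ Real.exp (-(x/a)) * Real.exp (-((x+1)/a) + ((x+1)/a)^2) :=
          mul_le_mul l1 l2 (by positivity) (Real.exp_pos _).le
      _ = Real.exp (-(x/a) + (-((x+1)/a) + ((x+1)/a)^2)) := (Real.exp_add _ _).symm
      _ ≤ Real.exp (-(2*x+1)/a + (x+1)^2/a^2) := by rw [hid2]

set_option maxHeartbeats 1000000 in
lemma ee_bounds (d q : ℕ) (hd : 1 ≤ d) (hq : 1 ≤ q) :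
    ∀ j : ℕ, 4*j ≤ d →
    ((d + (2*d+1)*q).choose d : ℝ)^2 *
        Real.exp (-(j:ℝ)^2 * (1/(d:ℝ) + 1/((2*(d:ℝ)+1)*(q:ℝ)))
          - 2*(j:ℝ)^3 * (1/(d:ℝ)^2 + 1/((2*(d:ℝ)+1)*(q:ℝ))^2))
      ≤ ((d + (2*d+1)*q).choose (d-j) : ℝ) * ((d + (2*d+1)*q).choose (d+j) : ℝ) ∧
    ((d + (2*d+1)*q).choose (d-j) : ℝ) * ((d + (2*d+1)*q).choose (d+j) : ℝ)
      ≤ ((d + (2*d+1)*q).choose d : ℝ)^2 *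
        Real.exp (-(j:ℝ)^2 * (1/(d:ℝ) + 1/((2*(d:ℝ)+1)*(q:ℝ)))
          + 2*(j:ℝ)^3 * (1/(d:ℝ)^2 + 1/((2*(d:ℝ)+1)*(q:ℝ))^2)) := by
  have hd1 : (1:ℝ) ≤ (d:ℝ) := by exact_mod_cast hd
  have hdP : d ≤ (2*d+1)*q := by
    calc d ≤ (2*d+1)*1 := by omega
      _ ≤ (2*d+1)*q := Nat.mul_le_mul_left _ hq
  have hM1 : (1:ℝ) ≤ (2*(d:ℝ)+1)*(q:ℝ) := by
    have : (1:ℕ) ≤ (2*d+1)*q := le_trans hd hdP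
    exact_mod_cast this
  intro j
  induction j with
  | zero => intro _; norm_num [pow_two]
  | succ j ih =>
    intro hj
    have hj' : 4*j ≤ d := by omega
    obtain ⟨ih1, ih2⟩ := ih hj'
    have hjd : j + 1 ≤ d := by omega
    have hjP : j + 1 ≤ (2*d+1)*q := le_trans hjd hdP
    have hjP' : j ≤ (2*d+1)*q := by omega
    -- nat recurrences
    have h1 : (d+(2*d+1)*q).choose (d+(j+1)) * (d+j+1)
        = (d+(2*d+1)*q).choose (d+j) * ((2*d+1)*q - j) := by
      have h := Nat.choose_succ_right_eq (d+(2*d+1)*q) (d+j)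
      have hsub : (d+(2*d+1)*q) - (d+j) = (2*d+1)*q - j := by omega
      rw [hsub] at h
      have e : d+(j+1) = d+j+1 := by omega
      rw [e]; exact h
    have h2 : (d+(2*d+1)*q).choose (d-j) * (d-j)
        = (d+(2*d+1)*q).choose (d-(j+1)) * ((2*d+1)*q + (j+1)) := by
      have h := Nat.choose_succ_right_eq (d+(2*d+1)*q) (d-(j+1))
      have e1 : d-(j+1)+1 = d-j := by omega
      have e2 : (d+(2*d+1)*q) - (d-(j+1)) = (2*d+1)*q + (j+1) := by omega
      rw [e1, e2] at h
      exact h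
    set m := d+(2*d+1)*q with hm
    set dR : ℝ := (d:ℝ) with hdR
    set jR : ℝ := (j:ℝ) with hjR
    set M : ℝ := (2*(d:ℝ)+1)*(q:ℝ) with hM
    have h1R : (m.choose (d+(j+1)) : ℝ) * (dR+jR+1) = (m.choose (d+j) : ℝ) * (M - jR) := by
      have hc := congrArg (fun n : ℕ => (n:ℝ)) h1
      push_cast [Nat.cast_sub hjP'] at hc
      linear_combination hc
    have h2R : (m.choose (d-j) : ℝ) * (dR-jR) = (m.choose (d-(j+1)) : ℝ) * (M + jR + 1) := by
      have hc := congrArg (fun n : ℕ => (n:ℝ)) h2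
      push_cast [Nat.cast_sub (by omega : j ≤ d)] at hc
      linear_combination hc
    have hden : (0:ℝ) < (dR+jR+1)*(M+jR+1) := by positivity
    have key' : (m.choose (d-(j+1)) : ℝ) * (m.choose (d+(j+1)) : ℝ) * ((dR+jR+1)*(M+jR+1))
        = ((m.choose (d-j) : ℝ) * (m.choose (d+j) : ℝ)) * ((dR-jR)*(M-jR)) := by
      linear_combination ((m.choose (d-(j+1)) : ℝ) * (M+jR+1)) * h1R
        - ((m.choose (d+j) : ℝ) * (M-jR)) * h2R
    have key : (m.choose (d-(j+1)) : ℝ) * (m.choose (d+(j+1)) : ℝ)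
        = ((m.choose (d-j) : ℝ) * (m.choose (d+j) : ℝ))
          * (((dR-jR)/(dR+jR+1)) * ((M-jR)/(M+jR+1))) := by
      rw [div_mul_div_comm, ← mul_div_assoc, eq_div_iff hden.ne']
      linear_combination key'
    have hjR0 : (0:ℝ) ≤ jR := by positivity
    have h4d : 4*(jR+1) ≤ dR := by
      have : ((4*(j+1):ℕ):ℝ) ≤ (d:ℝ) := by exact_mod_cast hj
      push_cast at this; linarith
    have hdM : dR ≤ M := by
      rw [hdR, hM]
      have : ((d:ℕ):ℝ) ≤ (((2*d+1)*q:ℕ):ℝ) := by exact_mod_cast hdP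
      push_cast at this; linarith
    have h4M : 4*(jR+1) ≤ M := le_trans h4d hdM
    obtain ⟨r1l, r1u⟩ := ratio_bound dR jR hd1 hjR0 h4d
    obtain ⟨r2l, r2u⟩ := ratio_bound M jR hM1 hjR0 h4M
    have hF1 : (0:ℝ) ≤ (dR-jR)/(dR+jR+1) := le_trans (Real.exp_pos _).le r1l
    have hF2 : (0:ℝ) ≤ (M-jR)/(M+jR+1) := le_trans (Real.exp_pos _).le r2l
    have hAB0 : (0:ℝ) ≤ (m.choose (d-j) : ℝ) * (m.choose (d+j) : ℝ) := by positivity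
    have hT0 : (0:ℝ) ≤ 1/dR^2 + 1/M^2 := by positivity
    have keyexp1 : -(jR+1)^2 * (1/dR + 1/M) - 2*(jR+1)^3 * (1/dR^2 + 1/M^2)
        ≤ (-(jR)^2 * (1/dR + 1/M) - 2*(jR)^3 * (1/dR^2 + 1/M^2))
          + ((-(2*jR+1)/dR - 2*(jR+1)^2/dR^2) + (-(2*jR+1)/M - 2*(jR+1)^2/M^2)) := by
      have hid : (-(jR)^2 * (1/dR + 1/M) - 2*(jR)^3 * (1/dR^2 + 1/M^2))
          + ((-(2*jR+1)/dR - 2*(jR+1)^2/dR^2) + (-(2*jR+1)/M - 2*(jR+1)^2/M^2))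
          = -(jR+1)^2 * (1/dR + 1/M) - 2*(jR+1)^3 * (1/dR^2 + 1/M^2)
            + (4*jR^2+2*jR) * (1/dR^2 + 1/M^2) := by ring
      rw [hid]
      exact le_add_of_nonneg_right (mul_nonneg (by positivity : (0:ℝ) ≤ 4*jR^2+2*jR) hT0)
    have keyexp2 : (-(jR)^2 * (1/dR + 1/M) + 2*(jR)^3 * (1/dR^2 + 1/M^2))
          + ((-(2*jR+1)/dR + (jR+1)^2/dR^2) + (-(2*jR+1)/M + (jR+1)^2/M^2))
        ≤ -(jR+1)^2 * (1/dR + 1/M) + 2*(jR+1)^3 * (1/dR^2 + 1/M^2) := by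
      have hid : (-(jR)^2 * (1/dR + 1/M) + 2*(jR)^3 * (1/dR^2 + 1/M^2))
          + ((-(2*jR+1)/dR + (jR+1)^2/dR^2) + (-(2*jR+1)/M + (jR+1)^2/M^2))
          = -(jR+1)^2 * (1/dR + 1/M) + 2*(jR+1)^3 * (1/dR^2 + 1/M^2)
            - (5*jR^2+4*jR+1) * (1/dR^2 + 1/M^2) := by ring
      rw [hid]
      exact sub_le_self _ (mul_nonneg (by positivity : (0:ℝ) ≤ 5*jR^2+4*jR+1) hT0)
    have hj1cast : ((j+1 : ℕ):ℝ) = jR + 1 := by push_cast; ring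
    rw [hj1cast]
    constructor
    · calc ((m.choose d:ℝ))^2 * Real.exp (-(jR+1)^2 * (1/dR + 1/M) - 2*(jR+1)^3 * (1/dR^2 + 1/M^2))
          ≤ ((m.choose d:ℝ))^2 * Real.exp ((-(jR)^2 * (1/dR + 1/M) - 2*(jR)^3 * (1/dR^2 + 1/M^2))
              + ((-(2*jR+1)/dR - 2*(jR+1)^2/dR^2) + (-(2*jR+1)/M - 2*(jR+1)^2/M^2))) := by
            exact mul_le_mul_of_nonneg_left (Real.exp_le_exp.2 keyexp1) (by positivity)
        _ = (((m.choose d:ℝ))^2 * Real.exp (-(jR)^2 * (1/dR + 1/M) - 2*(jR)^3 * (1/dR^2 + 1/M^2)))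
              * (Real.exp (-(2*jR+1)/dR - 2*(jR+1)^2/dR^2) * Real.exp (-(2*jR+1)/M - 2*(jR+1)^2/M^2)) :=
            (exp_merge _ _ _ _).symm
        _ ≤ ((m.choose (d-j) : ℝ) * (m.choose (d+j) : ℝ))
              * (((dR-jR)/(dR+jR+1)) * ((M-jR)/(M+jR+1))) := by
            apply mul_le_mul ih1 (mul_le_mul r1l r2l (Real.exp_pos _).le hF1)
              (by positivity) hAB0
        _ = (m.choose (d-(j+1)) : ℝ) * (m.choose (d+(j+1)) : ℝ) := key.symm
    · calc (m.choose (d-(j+1)) : ℝ) * (m.choose (d+(j+1)) : ℝ)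
          = ((m.choose (d-j) : ℝ) * (m.choose (d+j) : ℝ))
              * (((dR-jR)/(dR+jR+1)) * ((M-jR)/(M+jR+1))) := key
        _ ≤ (((m.choose d:ℝ))^2 * Real.exp (-(jR)^2 * (1/dR + 1/M) + 2*(jR)^3 * (1/dR^2 + 1/M^2)))
              * (Real.exp (-(2*jR+1)/dR + (jR+1)^2/dR^2) * Real.exp (-(2*jR+1)/M + (jR+1)^2/M^2)) := by
            apply mul_le_mul ih2 (mul_le_mul r1u r2u hF2 (Real.exp_pos _).le)
              (by positivity) (by positivity)
        _ = ((m.choose d:ℝ))^2 * Real.exp ((-(jR)^2 * (1/dR + 1/M) + 2*(jR)^3 * (1/dR^2 + 1/M^2))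
              + ((-(2*jR+1)/dR + (jR+1)^2/dR^2) + (-(2*jR+1)/M + (jR+1)^2/M^2))) :=
            exp_merge _ _ _ _
        _ ≤ ((m.choose d:ℝ))^2 * Real.exp (-(jR+1)^2 * (1/dR + 1/M) + 2*(jR+1)^3 * (1/dR^2 + 1/M^2)) := by
            exact mul_le_mul_of_nonneg_left (Real.exp_le_exp.2 keyexp2) (by positivity)

set_option maxHeartbeats 1000000 in
/-- Lemma 15(b): `e_ℓ ∼ e_0·exp(-kℓ²/(d(k-1)))` for `ℓ = O(√d)` as
`n = (2d+1)k - 1 → ∞`. -/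
theorem ee_gaussian_asymptotic_k_sub_one (C ε : ℝ) (hC : 0 < C) (hε : 0 < ε) :
    ∃ D : ℕ, ∀ k d ℓ : ℕ, Odd k → 3 ≤ k → D ≤ d →
      (ℓ : ℝ) ≤ C * Real.sqrt d → ℓ ≤ d →
      |(ee ((2 * d + 1) * k - 1) d ℓ : ℝ) -
          (ee ((2 * d + 1) * k - 1) d 0 : ℝ) *
            Real.exp (-((k : ℝ) * (ℓ : ℝ) ^ 2) / ((d : ℝ) * ((k : ℝ) - 1)))| ≤
        ε * ((ee ((2 * d + 1) * k - 1) d 0 : ℝ) *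
          Real.exp (-((k : ℝ) * (ℓ : ℝ) ^ 2) / ((d : ℝ) * ((k : ℝ) - 1)))) := by
  set δ := Real.log (1+ε) with hδdef
  have hδ : 0 < δ := Real.log_pos (by linarith)
  have hδε : δ ≤ ε := by
    have := Real.log_le_sub_one_of_pos (show (0:ℝ) < 1+ε by linarith)
    simpa [hδdef] using this
  have hδexp : (1:ℝ) + ε = Real.exp δ := (Real.exp_log (by linarith)).symm
  clear_value δ
  clear hδdef
  refine ⟨⌈16*C^2 + C^2/(2*δ) + 64*C^6/δ^2⌉₊ + 1, ?_⟩
  intro k d ℓ hk hk3 hD hℓC hℓd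
  obtain ⟨q, hqk⟩ := hk
  subst hqk
  have hq1 : 1 ≤ q := by omega
  have hd1 : 1 ≤ d := by omega
  have h2m : (2*d+1)*(2*q+1) - 1 = 2*(d + (2*d+1)*q) := by
    have : (2*d+1)*(2*q+1) = 2*(d+(2*d+1)*q)+1 := by ring
    omega
  have hn2 : ((2*d+1)*(2*q+1) - 1)/2 = d + (2*d+1)*q := by rw [h2m]; omega
  have hdR1 : (1:ℝ) ≤ (d:ℝ) := by exact_mod_cast hd1
  have hq1R : (1:ℝ) ≤ (q:ℝ) := by exact_mod_cast hq1
  have hceil : ((⌈16*C^2 + C^2/(2*δ) + 64*C^6/δ^2⌉₊ : ℕ) : ℝ) ≤ (d:ℝ) :=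
    Nat.cast_le.2 (by omega)
  have hxd : 16*C^2 + C^2/(2*δ) + 64*C^6/δ^2 ≤ (d:ℝ) := (Nat.le_ceil _).trans hceil
  have ha0 : (0:ℝ) ≤ 16*C^2 := by positivity
  have hb0 : (0:ℝ) ≤ C^2/(2*δ) := by positivity
  have hc0 : (0:ℝ) ≤ 64*C^6/δ^2 := by positivity
  have h16 : 16*C^2 ≤ (d:ℝ) := by linarith
  have hA : C^2/(2*δ) ≤ (d:ℝ) := by linarith
  have hB : 64*C^6/δ^2 ≤ (d:ℝ) := by linarith
  have hr0 : 0 ≤ Real.sqrt d := Real.sqrt_nonneg _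
  have hr2 : Real.sqrt d ^ 2 = (d:ℝ) := Real.sq_sqrt (by positivity)
  have hr1 : 1 ≤ Real.sqrt d := by clear * - hdR1 hr0 hr2; nlinarith
  have hrpos : 0 < Real.sqrt d := lt_of_lt_of_le one_pos hr1
  have h4C : 4*C ≤ Real.sqrt d := by clear * - h16 hr0 hr2 hC; nlinarith
  have hℓ0 : (0:ℝ) ≤ (ℓ:ℝ) := by positivity
  have h4ℓ : 4*ℓ ≤ d := by
    have : 4*(ℓ:ℝ) ≤ (d:ℝ) := by clear * - hℓC h4C hr0 hr2 hℓ0 hC; nlinarith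
    exact_mod_cast this
  obtain ⟨low, up⟩ := ee_bounds d q hd1 hq1 ℓ h4ℓ
  have hdP : d ≤ (2*d+1)*q := by
    calc d ≤ (2*d+1)*1 := by omega
      _ ≤ (2*d+1)*q := Nat.mul_le_mul_left _ hq1
  have hdM : (d:ℝ) ≤ (2*(d:ℝ)+1)*(q:ℝ) := by
    have : ((d:ℕ):ℝ) ≤ (((2*d+1)*q:ℕ):ℝ) := by exact_mod_cast hdP
    push_cast at this; linarith
  have heeℓ : (ee ((2*d+1)*(2*q+1) - 1) d ℓ : ℝ)
      = ((d + (2*d+1)*q).choose (d-ℓ) : ℝ) * ((d + (2*d+1)*q).choose (d+ℓ) : ℝ) := by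
    unfold ee; rw [hn2]; push_cast; ring
  have hee0 : (ee ((2*d+1)*(2*q+1) - 1) d 0 : ℝ) = ((d + (2*d+1)*q).choose d : ℝ)^2 := by
    unfold ee; rw [hn2]
    simp only [Nat.sub_zero, Nat.add_zero]
    push_cast; ring
  have hA0 : -(((2*q+1:ℕ):ℝ) * (ℓ:ℝ)^2) / ((d:ℝ) * (((2*q+1:ℕ):ℝ) - 1))
      = -((ℓ:ℝ)^2/(d:ℝ) + (ℓ:ℝ)^2/(2*(d:ℝ)*(q:ℝ))) := by
    have hkR : ((2*q+1:ℕ):ℝ) = 2*(q:ℝ)+1 := by push_cast; ring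
    rw [hkR]
    have hd0 : (d:ℝ) ≠ 0 := by linarith
    have hq0 : (q:ℝ) ≠ 0 := by linarith
    field_simp
    ring
  -- abbreviations
  set dR := (d:ℝ) with hdRdef
  set lR := (ℓ:ℝ) with hlRdef
  set qR := (q:ℝ) with hqRdef
  set M := (2*dR+1)*qR with hMdef
  set c2 := ((d + (2*d+1)*q).choose d : ℝ)^2 with hc2def
  set E := lR^2 * (1/dR + 1/M) with hEdef
  set T := 2*lR^3 * (1/dR^2 + 1/M^2) with hTdef
  set A0 := lR^2/dR + lR^2/(2*dR*qR) with hA0def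
  have hc2pos : 0 < c2 := by
    have h1 : 0 < (d + (2*d+1)*q).choose d := Nat.choose_pos (Nat.le_add_right _ _)
    have h2 : (0:ℝ) < ((d + (2*d+1)*q).choose d : ℝ) := by exact_mod_cast h1
    rw [hc2def]; positivity
  have hdRpos : (0:ℝ) < dR := lt_of_lt_of_le one_pos hdR1
  have hqRpos : (0:ℝ) < qR := lt_of_lt_of_le one_pos hq1R
  have hMpos : (0:ℝ) < M := lt_of_lt_of_le hdRpos hdM
  clear_value dR lR qR M c2 E T A0
  clear hceil hxd ha0 hb0 hc0 hD hℓd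
  have hdne : dR ≠ 0 := ne_of_gt hdRpos
  have hqne : qR ≠ 0 := ne_of_gt hqRpos
  have h2d1pos : (0:ℝ) < 2*dR+1 := by linarith
  have hdiff : 1/(2*dR*qR) - 1/M = 1/(2*dR*qR*(2*dR+1)) := by
    rw [hMdef]
    field_simp
    ring
  have hdenpos : (0:ℝ) < 2*dR*qR*(2*dR+1) := by
    have := mul_pos (mul_pos (mul_pos two_pos hdRpos) hqRpos) h2d1pos
    linarith [this]
  have hΔeq : A0 - E = lR^2 * (1/(2*dR*qR*(2*dR+1))) := by
    have h2' : A0 - E = lR^2 * (1/(2*dR*qR) - 1/M) := by rw [hA0def, hEdef]; ring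
    rw [hdiff] at h2'; exact h2'
  have hΔ0 : E ≤ A0 := by
    have h1 : (0:ℝ) ≤ lR^2 * (1/(2*dR*qR*(2*dR+1))) :=
      mul_nonneg (sq_nonneg lR) (le_of_lt (one_div_pos.2 hdenpos))
    clear * - hΔeq h1
    linarith [hΔeq, h1]
  have hl2 : lR^2 ≤ C^2 * dR := by
    clear * - hℓC hℓ0 hr0 hr2 hC
    nlinarith
  have hdR2pos : (0:ℝ) < dR^2 := pow_pos hdRpos 2
  have hΔ : A0 - E ≤ δ/2 := by
    have h3 : (4*dR^2) ≤ 2*dR*qR*(2*dR+1) := by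
      clear * - hdRpos hq1R hdR1; nlinarith
    have h4 : 1/(2*dR*qR*(2*dR+1)) ≤ 1/(4*dR^2) :=
      one_div_le_one_div_of_le (by linarith) h3
    have h5 : A0 - E ≤ lR^2 * (1/(4*dR^2)) := by
      rw [hΔeq]; exact mul_le_mul_of_nonneg_left h4 (sq_nonneg lR)
    have h6 : lR^2 * (1/(4*dR^2)) ≤ (C^2*dR) * (1/(4*dR^2)) := by
      apply mul_le_mul_of_nonneg_right hl2
      have h9 : (0:ℝ) < 4*dR^2 := by linarith
      positivity
    have h7 : (C^2*dR) * (1/(4*dR^2)) = C^2/(4*dR) := by field_simp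
    have h8 : C^2/(4*dR) ≤ δ/2 := by
      rw [div_le_iff₀ (by linarith : (0:ℝ) < 2*δ)] at hA
      rw [div_le_iff₀ (by linarith : (0:ℝ) < 4*dR)]
      clear * - hA
      linarith
    clear * - h5 h6 h7 h8
    linarith
  have hl30 : (0:ℝ) ≤ lR^3 := pow_nonneg hℓ0 3
  have hT : T ≤ δ/2 := by
    have hM2 : 1/M^2 ≤ 1/dR^2 := by
      apply one_div_le_one_div_of_le hdR2pos
      clear * - hdM hdRpos; nlinarith
    have hl3 : lR^3 ≤ C^3 * (Real.sqrt dR)^3 := by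
      calc lR^3 ≤ (C*Real.sqrt dR)^3 := pow_le_pow_left₀ hℓ0 hℓC 3
        _ = C^3 * (Real.sqrt dR)^3 := by ring
    have h1 : T ≤ 4*lR^3/dR^2 := by
      rw [hTdef]
      have hsum : 1/dR^2 + 1/M^2 ≤ 2/dR^2 := by
        have : 2/dR^2 = 1/dR^2 + 1/dR^2 := by ring
        linarith
      calc 2*lR^3 * (1/dR^2 + 1/M^2) ≤ 2*lR^3 * (2/dR^2) := by
            apply mul_le_mul_of_nonneg_left hsum
            linarith
        _ = 4*lR^3/dR^2 := by ring
    have hd3 : (Real.sqrt dR)^3 * Real.sqrt dR = dR^2 := by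
      have h' : (Real.sqrt dR)^3 * Real.sqrt dR = ((Real.sqrt dR)^2)^2 := by ring
      rw [h', hr2]
    have h2 : 4*lR^3/dR^2 ≤ 4*C^3/Real.sqrt dR := by
      have key : lR^3 * Real.sqrt dR ≤ C^3 * dR^2 := by
        calc lR^3 * Real.sqrt dR ≤ (C^3*(Real.sqrt dR)^3) * Real.sqrt dR :=
              mul_le_mul_of_nonneg_right hl3 hr0
          _ = C^3 * dR^2 := by rw [← hd3]; ring
      rw [div_le_div_iff₀ hdR2pos hrpos]
      clear * - key
      linarith
    have h3 : 4*C^3/Real.sqrt dR ≤ δ/2 := by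
      rw [div_le_div_iff₀ hrpos (by norm_num : (0:ℝ) < 2)]
      have h64 : 64*C^6 ≤ δ^2 * dR := by
        rw [div_le_iff₀ (by positivity : (0:ℝ) < δ^2)] at hB
        clear * - hB; linarith
      have h64' : 64*C^6 ≤ (δ * Real.sqrt dR)^2 := by
        have he : (δ * Real.sqrt dR)^2 = δ^2 * dR := by rw [mul_pow, hr2]
        rw [he]; exact h64
      have hpos8 : (0:ℝ) < 8*C^3 + δ*Real.sqrt dR := by
        have hds := mul_nonneg hδ.le hr0
        clear * - hds hC
        linarith [pow_pos hC 3]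
      clear * - h64' hpos8; nlinarith [h64', hpos8]
    clear * - h1 h2 h3
    linarith
  have hexp1 : Real.exp (-lR^2 * (1/dR + 1/M) + T) ≤ Real.exp (-A0) * (1+ε) := by
    rw [hδexp, ← Real.exp_add]
    apply Real.exp_le_exp.2
    have hE' : -lR^2 * (1/dR + 1/M) = -E := by rw [hEdef]; ring
    rw [hE']
    clear * - hΔ hT
    linarith
  have hexp2 : Real.exp (-A0) * (1-ε) ≤ Real.exp (-lR^2 * (1/dR + 1/M) - T) := by
    have hsplit : Real.exp (-lR^2 * (1/dR + 1/M) - T)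
        = Real.exp (-A0) * Real.exp (A0 - E - T) := by
      rw [← Real.exp_add]
      congr 1
      rw [hEdef]; ring
    rw [hsplit]
    apply mul_le_mul_of_nonneg_left _ (Real.exp_pos _).le
    have h1 := Real.add_one_le_exp (A0 - E - T)
    have h2 : -ε ≤ A0 - E - T := by
      clear * - hΔ0 hT hδε hδ
      linarith
    clear * - h1 h2
    linarith
  rw [heeℓ, hee0, hA0]
  have hup : ((d + (2*d+1)*q).choose (d-ℓ) : ℝ) * ((d + (2*d+1)*q).choose (d+ℓ) : ℝ)
      ≤ c2 * (Real.exp (-A0) * (1+ε)) :=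
    le_trans up (mul_le_mul_of_nonneg_left hexp1 hc2pos.le)
  have hlow : c2 * (Real.exp (-A0) * (1-ε))
      ≤ ((d + (2*d+1)*q).choose (d-ℓ) : ℝ) * ((d + (2*d+1)*q).choose (d+ℓ) : ℝ) :=
    le_trans (mul_le_mul_of_nonneg_left hexp2 hc2pos.le) low
  have hq1' : c2 * (Real.exp (-A0) * (1+ε)) = c2 * Real.exp (-A0) + ε * (c2 * Real.exp (-A0)) := by ring
  have hq2' : c2 * (Real.exp (-A0) * (1-ε)) = c2 * Real.exp (-A0) - ε * (c2 * Real.exp (-A0)) := by ring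
  clear * - hup hlow hq1' hq2'
  rw [abs_le]
  constructor <;> linarith [hup, hlow, hq1', hq2']
end

section
/- For every ε > 0 there exists an integer D such that for every odd integer k ≥ 3 and every integer d ≥ D, setting n = (2d+1)k − 1, one has (1 − ε)·MMS(n,k) ≤ Q ≤ (1 + ε)·MMS(n,k). (That is, Q ∼ MMS(n,k) as n → ∞ with n ≡ k−1 (mod 2k), k = o(n) and k ≥ 3 odd; here MMS(n,k) = C(n,2d)/2.) -/
/-- The Meagher–Moura–Stevens bound `MMS(n,k) = C(n,c) / (k - r + r(c+1)/(n-c))`,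
where `c = n / k` and `r = n % k`. -/
noncomputable def MMS (n k : ℕ) : ℝ :=
  (n.choose (n / k) : ℝ) /
    ((k : ℝ) - (n % k : ℕ) + (n % k : ℕ) * ((n / k : ℕ) + 1) / ((n : ℝ) - (n / k : ℕ)))


/-- `a(x) = e_0 + 2·Σ_{ℓ=1}^{x} e_ℓ` for `x ∈ {0,…,d}`, with `a(-1) = 0`. -/
def aF (n d : ℕ) (x : ℤ) : ℤ :=
  if x < 0 then 0 else (ee n d 0 : ℤ) + 2 * ∑ ℓ ∈ Finset.Icc 1 x.toNat, (ee n d ℓ : ℤ)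

/-- `b(x) = 2·Σ_{ℓ=x+1}^{d} e*_ℓ` for `x ∈ {0,…,d}`, with `b(-1) = C(n,2d+1)`. -/
def bF (n d : ℕ) (x : ℤ) : ℤ :=
  if x < 0 then (n.choose (2 * d + 1) : ℤ)
  else 2 * ∑ ℓ ∈ Finset.Icc (x.toNat + 1) d, (es n d ℓ : ℤ)


/-- auxiliary: `E m d ℓ = C(m,d-ℓ)C(m,d+ℓ)` -/
def EE (m d ℓ : ℕ) : ℕ := m.choose (d - ℓ) * m.choose (d + ℓ)
def ES (m d ℓ : ℕ) : ℕ := m.choose (d - ℓ) * m.choose (d + 1 + ℓ)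

section core
variable {m d K : ℕ} (hm : m = (2*d+1)*K + d) (hK : 1 ≤ K)
include hm

lemma L1 {ℓ : ℕ} (hl : ℓ ≤ d) :
    ES m d ℓ * (d+1+ℓ) = EE m d ℓ * ((2*d+1)*K - ℓ) := by
  have h1 : m.choose ((d+ℓ)+1) * ((d+ℓ)+1) = m.choose (d+ℓ) * (m - (d+ℓ)) :=
    Nat.choose_succ_right_eq m (d+ℓ)
  have h2 : m - (d+ℓ) = (2*d+1)*K - ℓ := by omega
  have h3 : d + 1 + ℓ = (d+ℓ)+1 := by omega
  unfold ES EE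
  rw [h3, mul_assoc, h1, h2]; ring

include hK

lemma L2 {ℓ : ℕ} (hl : ℓ ≤ d) : ES m d ℓ ≤ 2*K*EE m d ℓ := by
  have h1 := L1 hm hl
  have h2 : EE m d ℓ * ((2*d+1)*K - ℓ) ≤ 2*K*EE m d ℓ * (d+1+ℓ) := by
    have : (2*d+1)*K - ℓ ≤ 2*K*(d+1+ℓ) :=
      le_trans (Nat.sub_le _ _) (by nlinarith)
    calc EE m d ℓ * ((2*d+1)*K - ℓ) ≤ EE m d ℓ * (2*K*(d+1+ℓ)) :=
          Nat.mul_le_mul_left _ this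
      _ = 2*K*EE m d ℓ * (d+1+ℓ) := by ring
  exact Nat.le_of_mul_le_mul_right (h1 ▸ h2) (by omega)

lemma L3 {ℓ : ℕ} (hl : ℓ ≤ d) :
    2*K*(EE m d ℓ)*(d+1) ≤ ES m d ℓ*(d+1) + K*(EE m d ℓ)*(1+5*ℓ) := by
  have h1 := L1 hm hl
  have h2 := L2 hm hK hl
  have key : 2*K*(EE m d ℓ)*(d+1+ℓ) = ES m d ℓ*(d+1+ℓ) + EE m d ℓ * (K + 2*K*ℓ + ℓ) := by
    rw [h1]
    have hle : ℓ ≤ (2*d+1)*K := le_trans hl (by nlinarith)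
    have h4 : 2*K*(d+1+ℓ) = ((2*d+1)*K - ℓ) + (K + 2*K*ℓ + ℓ) := by
      zify [hle]; ring
    calc 2*K*(EE m d ℓ)*(d+1+ℓ) = EE m d ℓ * (2*K*(d+1+ℓ)) := by ring
      _ = EE m d ℓ * (((2*d+1)*K - ℓ) + (K + 2*K*ℓ + ℓ)) := by rw [h4]
      _ = EE m d ℓ * ((2*d+1)*K - ℓ) + EE m d ℓ * (K + 2*K*ℓ + ℓ) := by ring
  have hEs : ES m d ℓ * ℓ ≤ 2*K*EE m d ℓ * ℓ := Nat.mul_le_mul_right ℓ h2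
  have hKl : EE m d ℓ * ℓ ≤ K*(EE m d ℓ*ℓ) := Nat.le_mul_of_pos_left _ hK
  nlinarith [key, hEs, hKl]

lemma L4 {ℓ : ℕ} (hl : ℓ < d) :
    EE m d (ℓ+1) * ((d+1+ℓ)*((2*d+1)*K+ℓ+1)) = EE m d ℓ * ((d-ℓ)*((2*d+1)*K-ℓ)) := by
  have h1 : m.choose ((d+ℓ)+1) * ((d+ℓ)+1) = m.choose (d+ℓ) * (m - (d+ℓ)) :=
    Nat.choose_succ_right_eq m (d+ℓ)
  have h2 : m.choose ((d-ℓ-1)+1) * ((d-ℓ-1)+1) = m.choose (d-ℓ-1) * (m - (d-ℓ-1)) :=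
    Nat.choose_succ_right_eq m (d-ℓ-1)
  have e1 : (d-ℓ-1)+1 = d-ℓ := by omega
  have e2 : m - (d+ℓ) = (2*d+1)*K - ℓ := by omega
  have e3 : m - (d-ℓ-1) = (2*d+1)*K+ℓ+1 := by omega
  have e4 : d - (ℓ+1) = d-ℓ-1 := by omega
  have e5 : d + (ℓ+1) = (d+ℓ)+1 := by omega
  rw [e2] at h1
  rw [e1, e3] at h2
  unfold EE
  rw [e4, e5]
  calc m.choose (d-ℓ-1) * m.choose ((d+ℓ)+1) * ((d+1+ℓ)*((2*d+1)*K+ℓ+1))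
      = (m.choose (d-ℓ-1) * ((2*d+1)*K+ℓ+1)) * (m.choose ((d+ℓ)+1) * ((d+ℓ)+1)) := by ring
    _ = (m.choose (d-ℓ) * (d-ℓ)) * (m.choose (d+ℓ) * ((2*d+1)*K - ℓ)) := by rw [← h2, h1]
    _ = m.choose (d-ℓ) * m.choose (d+ℓ) * ((d-ℓ)*((2*d+1)*K-ℓ)) := by ring

lemma L4b {ℓ : ℕ} (hl : ℓ < d) : EE m d (ℓ+1) * (d+1+ℓ) ≤ EE m d ℓ * (d-ℓ) := by
  have h := L4 hm hK hl
  have hpos : 0 < (2*d+1)*K+ℓ+1 := by positivity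
  have : EE m d (ℓ+1) * (d+1+ℓ) * ((2*d+1)*K+ℓ+1) ≤ EE m d ℓ * (d-ℓ) * ((2*d+1)*K+ℓ+1) := by
    calc EE m d (ℓ+1) * (d+1+ℓ) * ((2*d+1)*K+ℓ+1) = EE m d (ℓ+1) * ((d+1+ℓ)*((2*d+1)*K+ℓ+1)) := by ring
      _ = EE m d ℓ * ((d-ℓ)*((2*d+1)*K-ℓ)) := h
      _ ≤ EE m d ℓ * ((d-ℓ)*((2*d+1)*K+ℓ+1)) := by
          apply Nat.mul_le_mul_left; apply Nat.mul_le_mul_left; omega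
      _ = EE m d ℓ * (d-ℓ) * ((2*d+1)*K+ℓ+1) := by ring
  exact Nat.le_of_mul_le_mul_right this hpos

lemma L5 {ℓ : ℕ} (hl : ℓ < d) : EE m d (ℓ+1) ≤ EE m d ℓ := by
  have h := L4b hm hK hl
  have : EE m d (ℓ+1) * (d+1+ℓ) ≤ EE m d ℓ * (d+1+ℓ) :=
    le_trans h (Nat.mul_le_mul_left _ (by omega))
  exact Nat.le_of_mul_le_mul_right this (by omega)

lemma L5' {i j : ℕ} (hij : i ≤ j) (hj : j ≤ d) : EE m d j ≤ EE m d i := by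
  induction j with
  | zero => simpa [Nat.le_zero.mp hij]
  | succ n ih =>
    rcases Nat.lt_or_ge i (n+1) with h | h
    · exact le_trans (L5 hm hK (by omega)) (ih (by omega) (by omega))
    · have : i = n+1 := by omega
      simp [this]

lemma L6 {M : ℕ} (j : ℕ) (hj : M + j ≤ d) :
    EE m d (M+j) * (d+M)^j ≤ EE m d M * d^j := by
  induction j with
  | zero => simp
  | succ j ih =>
    have ih' := ih (by omega)
    have h1 : EE m d (M+j+1) * (d+1+(M+j)) ≤ EE m d (M+j) * (d-(M+j)) := by
      have := L4b hm hK (ℓ := M+j) (by omega)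
      convert this using 3 <;> omega
    calc EE m d (M+(j+1)) * (d+M)^(j+1)
        = (EE m d (M+j+1) * (d+M)) * (d+M)^j := by ring_nf
      _ ≤ (EE m d (M+j+1) * (d+1+(M+j))) * (d+M)^j := by
          apply Nat.mul_le_mul_right; apply Nat.mul_le_mul_left; omega
      _ ≤ (EE m d (M+j) * (d-(M+j))) * (d+M)^j := Nat.mul_le_mul_right _ h1
      _ ≤ (EE m d (M+j) * (d+M)^j) * d := by
          calc (EE m d (M+j) * (d-(M+j))) * (d+M)^j ≤ (EE m d (M+j) * d) * (d+M)^j := by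
                apply Nat.mul_le_mul_right; apply Nat.mul_le_mul_left; omega
            _ = (EE m d (M+j) * (d+M)^j) * d := by ring
      _ ≤ (EE m d M * d^j) * d := Nat.mul_le_mul_right _ ih'
      _ = EE m d M * d^(j+1) := by ring

lemma L7 {ℓ : ℕ} (hl : ℓ+1 ≤ d) :
    EE m d ℓ * (d - 4*(ℓ+1)) ≤ EE m d (ℓ+1) * d := by
  have h := L4 hm hK (ℓ := ℓ) (by omega)
  rcases Nat.lt_or_ge d (4*(ℓ+1)) with h4 | h4
  · simp [Nat.sub_eq_zero_of_le (le_of_lt h4)]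
  · -- numeric: (d-4(ℓ+1))*((d+1+ℓ)*((2d+1)K+ℓ+1)) ≤ d*((d-ℓ)*((2d+1)K-ℓ))
    have hnum : (d - 4*(ℓ+1))*((d+1+ℓ)*((2*d+1)*K+ℓ+1)) ≤ d*((d-ℓ)*((2*d+1)*K-ℓ)) := by
      have hdP : d ≤ (2*d+1)*K := by nlinarith
      have hl2 : ℓ ≤ (2*d+1)*K := by omega
      zify [h4, (by omega : ℓ ≤ d), hl2]
      have hdP' : (d:ℤ) ≤ (2*(d:ℤ)+1)*K := by exact_mod_cast hdP
      have hl' : (ℓ:ℤ) + 1 ≤ d := by exact_mod_cast hl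
      nlinarith [sq_nonneg ((ℓ:ℤ)+1), mul_nonneg (by linarith : (0:ℤ) ≤ ((2*(d:ℤ)+1)*K - d)) (by positivity : (0:ℤ) ≤ (ℓ:ℤ)+1)]
    have hkey : EE m d ℓ * (d - 4*(ℓ+1)) * ((d+1+ℓ)*((2*d+1)*K+ℓ+1))
        ≤ EE m d (ℓ+1) * d * ((d+1+ℓ)*((2*d+1)*K+ℓ+1)) := by
      calc EE m d ℓ * (d - 4*(ℓ+1)) * ((d+1+ℓ)*((2*d+1)*K+ℓ+1))
          = EE m d ℓ * ((d - 4*(ℓ+1))*((d+1+ℓ)*((2*d+1)*K+ℓ+1))) := by ring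
        _ ≤ EE m d ℓ * (d*((d-ℓ)*((2*d+1)*K-ℓ))) := Nat.mul_le_mul_left _ hnum
        _ = EE m d ℓ * ((d-ℓ)*((2*d+1)*K-ℓ)) * d := by ring
        _ = EE m d (ℓ+1) * ((d+1+ℓ)*((2*d+1)*K+ℓ+1)) * d := by rw [h]
        _ = EE m d (ℓ+1) * d * ((d+1+ℓ)*((2*d+1)*K+ℓ+1)) := by ring
    exact Nat.le_of_mul_le_mul_right hkey (by positivity)

lemma L8a {ℓ : ℕ} (hl : ℓ ≤ d) : EE m d 0 * (d-4*ℓ)^ℓ ≤ EE m d ℓ * d^ℓ := by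
  induction ℓ with
  | zero => simp
  | succ j ih =>
    calc EE m d 0 * (d-4*(j+1))^(j+1)
        = (EE m d 0 * (d-4*(j+1))^j) * (d-4*(j+1)) := by ring
      _ ≤ (EE m d 0 * (d-4*j)^j) * (d-4*(j+1)) := by
          apply Nat.mul_le_mul_right; apply Nat.mul_le_mul_left
          exact Nat.pow_le_pow_left (by omega) j
      _ ≤ (EE m d j * d^j) * (d-4*(j+1)) := Nat.mul_le_mul_right _ (ih (by omega))
      _ = (EE m d j * (d-4*(j+1))) * d^j := by ring
      _ ≤ (EE m d (j+1) * d) * d^j := Nat.mul_le_mul_right _ (L7 hm hK hl)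
      _ = EE m d (j+1) * d^(j+1) := by ring

omit hm hK in
lemma pow_sub_lin (a b : ℕ) (hba : b ≤ a) : ∀ j, a^(j+1) ≤ b^(j+1) + (j+1)*(a-b)*a^j := by
  intro j
  induction j with
  | zero => simp only [zero_add, pow_one, one_mul, pow_zero, mul_one]; omega
  | succ j ih =>
    have h1 : a^(j+1+1) = a * a^(j+1) := by ring
    have h2 : a * a^(j+1) ≤ a*(b^(j+1) + (j+1)*(a-b)*a^j) := Nat.mul_le_mul_left _ ih
    have h2' : a*(b^(j+1) + (j+1)*(a-b)*a^j) = a*b^(j+1) + (j+1)*((a-b)*a^(j+1)) := by ring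
    have h3 : a*b^(j+1) = b^(j+1+1) + (a-b)*b^(j+1) := by zify [hba]; ring
    have h4 : (a-b)*b^(j+1) ≤ (a-b)*a^(j+1) :=
      Nat.mul_le_mul_left _ (Nat.pow_le_pow_left hba _)
    have h7 : (j+1+1)*(a-b)*a^(j+1) = (a-b)*a^(j+1) + (j+1)*((a-b)*a^(j+1)) := by ring
    linarith

lemma L8 {ℓ : ℕ} (h8 : 8*ℓ*ℓ ≤ d) (hl : ℓ ≤ d) : EE m d 0 ≤ 2 * EE m d ℓ := by
  rcases Nat.eq_zero_or_pos ℓ with rfl | hlpos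
  · omega
  have hd : 0 < d := by omega
  obtain ⟨j, rfl⟩ : ∃ j, ℓ = j+1 := ⟨ℓ-1, by omega⟩
  have h4d : 4*(j+1) ≤ d := by nlinarith
  have hsub : d - (d-4*(j+1)) = 4*(j+1) := by omega
  have h1 : d^(j+1) ≤ (d-4*(j+1))^(j+1) + (j+1)*(4*(j+1))*d^j := by
    have := pow_sub_lin d (d-4*(j+1)) (Nat.sub_le _ _) j
    rwa [hsub] at this
  have h2 : 2*((j+1)*(4*(j+1))*d^j) ≤ d^(j+1) := by
    have : 2*((j+1)*(4*(j+1))) ≤ d := by nlinarith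
    calc 2*((j+1)*(4*(j+1))*d^j) = (2*((j+1)*(4*(j+1))))*d^j := by ring
      _ ≤ d*d^j := Nat.mul_le_mul_right _ this
      _ = d^(j+1) := by ring
  have h3 : d^(j+1) ≤ 2*(d-4*(j+1))^(j+1) := by omega
  have h4 : EE m d 0 * d^(j+1) ≤ 2*EE m d (j+1) * d^(j+1) := by
    calc EE m d 0 * d^(j+1) ≤ EE m d 0 * (2*(d-4*(j+1))^(j+1)) := Nat.mul_le_mul_left _ h3
      _ = 2*(EE m d 0 * (d-4*(j+1))^(j+1)) := by ring
      _ ≤ 2*(EE m d (j+1) * d^(j+1)) := Nat.mul_le_mul_left _ (L8a hm hK hl)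
      _ = 2*EE m d (j+1) * d^(j+1) := by ring
  exact Nat.le_of_mul_le_mul_right h4 (by positivity)

omit hm hK in
lemma sum_reflect_lemma (g : ℕ → ℕ) (d : ℕ) :
    ∑ i ∈ Finset.range (2*d+1), g i
      = g d + ((∑ ℓ ∈ Finset.Icc 1 d, g (d-ℓ)) + ∑ ℓ ∈ Finset.Icc 1 d, g (d+ℓ)) := by
  have h1 : ∑ i ∈ Finset.Ico 0 (d+1), g i + ∑ i ∈ Finset.Ico (d+1) (2*d+1), g i
      = ∑ i ∈ Finset.Ico 0 (2*d+1), g i :=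
    Finset.sum_Ico_consecutive g (by omega) (by omega)
  have h2 : ∑ i ∈ Finset.range (d+1), g i = ∑ i ∈ Finset.range d, g i + g d :=
    Finset.sum_range_succ g d
  have h3 : ∑ i ∈ Finset.range d, g i = ∑ ℓ ∈ Finset.Icc 1 d, g (d-ℓ) := by
    apply Finset.sum_nbij' (fun i => d - i) (fun ℓ => d - ℓ) <;>
      simp only [Finset.mem_range, Finset.mem_Icc] <;> intros a ha
    · omega
    · omega
    · omega
    · omega
    · congr 1; omega
  have h4 : ∑ i ∈ Finset.Ico (d+1) (2*d+1), g i = ∑ ℓ ∈ Finset.Icc 1 d, g (d+ℓ) := by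
    apply Finset.sum_nbij' (fun i => i - d) (fun ℓ => d + ℓ) <;>
      simp only [Finset.mem_Ico, Finset.mem_Icc] <;> intros a ha
    · omega
    · omega
    · omega
    · omega
    · congr 1; omega
  rw [show Finset.Ico 0 (d+1) = Finset.range (d+1) from by rw [Finset.range_eq_Ico],
    show Finset.Ico 0 (2*d+1) = Finset.range (2*d+1) from by rw [Finset.range_eq_Ico]] at h1
  omega

lemma L9 : (2*m).choose (2*d) = EE m d 0 + 2 * ∑ ℓ ∈ Finset.Icc 1 d, EE m d ℓ := by
  have hv : (m+m).choose (2*d) = ∑ ij ∈ Finset.HasAntidiagonal.antidiagonal (2*d), m.choose ij.1 * m.choose ij.2 :=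
    Nat.add_choose_eq m m (2*d)
  rw [Finset.Nat.sum_antidiagonal_eq_sum_range_succ_mk] at hv
  have h2m : 2*m = m + m := by ring
  rw [h2m, hv]
  have hg := sum_reflect_lemma (fun i => m.choose i * m.choose (2*d - i)) d
  have e0 : (2*d) = d + d := by omega
  calc ∑ i ∈ Finset.range (2*d+1), m.choose i * m.choose (2*d-i)
      = (m.choose d * m.choose (2*d-d))
        + ((∑ ℓ ∈ Finset.Icc 1 d, m.choose (d-ℓ) * m.choose (2*d-(d-ℓ)))
          + ∑ ℓ ∈ Finset.Icc 1 d, m.choose (d+ℓ) * m.choose (2*d-(d+ℓ))) := hg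
    _ = EE m d 0 + 2 * ∑ ℓ ∈ Finset.Icc 1 d, EE m d ℓ := by
        have hc : m.choose d * m.choose (2*d-d) = EE m d 0 := by
          unfold EE; congr 2 <;> omega
        have hs1 : ∀ ℓ ∈ Finset.Icc 1 d, m.choose (d-ℓ) * m.choose (2*d-(d-ℓ)) = EE m d ℓ := by
          intro ℓ hℓ
          simp only [Finset.mem_Icc] at hℓ
          unfold EE; congr 2 <;> omega
        have hs2 : ∀ ℓ ∈ Finset.Icc 1 d, m.choose (d+ℓ) * m.choose (2*d-(d+ℓ)) = EE m d ℓ := by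
          intro ℓ hℓ
          simp only [Finset.mem_Icc] at hℓ
          unfold EE
          rw [(by omega : 2*d-(d+ℓ) = d - ℓ)]
          ring
        rw [Finset.sum_congr rfl hs1, Finset.sum_congr rfl hs2, hc]
        ring
-- A(x) in ℕ
def AN (m d x : ℕ) : ℕ := EE m d 0 + 2 * ∑ ℓ ∈ Finset.Icc 1 x, EE m d ℓ

lemma A_split {x : ℕ} (hx : x ≤ d) :
    AN m d x + 2 * ∑ ℓ ∈ Finset.Icc (x+1) d, EE m d ℓ = (2*m).choose (2*d) := by
  rw [L9 hm hK]
  unfold AN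
  have e1 : Finset.Icc 1 x = Finset.Ioc 0 x := by
    ext i; simp only [Finset.mem_Icc, Finset.mem_Ioc]; omega
  have e2 : Finset.Icc (x+1) d = Finset.Ioc x d := by
    ext i; simp only [Finset.mem_Icc, Finset.mem_Ioc]; omega
  have e3 : Finset.Icc 1 d = Finset.Ioc 0 d := by
    ext i; simp only [Finset.mem_Icc, Finset.mem_Ioc]; omega
  have h : ∑ ℓ ∈ Finset.Icc 1 x, EE m d ℓ + ∑ ℓ ∈ Finset.Icc (x+1) d, EE m d ℓ
      = ∑ ℓ ∈ Finset.Icc 1 d, EE m d ℓ := by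
    rw [e1, e2, e3]
    exact Finset.sum_Ioc_consecutive (fun ℓ => EE m d ℓ) (Nat.zero_le x) hx
  omega

lemma sum_le_C {y : ℕ} (hy : y ≤ d) :
    ∑ ℓ ∈ Finset.Icc 0 y, EE m d ℓ ≤ (2*m).choose (2*d) := by
  rw [L9 hm hK]
  have h1 : Finset.Icc 0 y = insert 0 (Finset.Icc 1 y) := by
    ext i; simp [Finset.mem_Icc, Finset.mem_insert]; omega
  rw [h1, Finset.sum_insert (by simp)]
  have h2 : ∑ ℓ ∈ Finset.Icc 1 y, EE m d ℓ ≤ ∑ ℓ ∈ Finset.Icc 1 d, EE m d ℓ :=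
    Finset.sum_le_sum_of_subset (by apply Finset.Icc_subset_Icc_right hy)
  omega

lemma E0_pos : 0 < EE m d 0 := by
  unfold EE
  have : d ≤ m := by omega
  simp only [Nat.sub_zero, Nat.add_zero]
  exact Nat.mul_pos (Nat.choose_pos this) (Nat.choose_pos this)
  
/-- central bound : `r * E0 ≤ C` for `r = sqrt d / 3`. -/
lemma central_bound (hd1 : 1 ≤ d) :
    (d.sqrt / 3) * EE m d 0 ≤ (2*m).choose (2*d) := by
  set r := d.sqrt / 3 with hr
  have hrd : 9*r*r ≤ d := by
    have h1 : 3*r ≤ d.sqrt := by omega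
    have h2 : d.sqrt * d.sqrt ≤ d := by simpa [pow_two] using Nat.sqrt_le' d
    nlinarith
  have hrle : r ≤ d := by nlinarith
  have key : ∀ ℓ ∈ Finset.Icc 1 r, EE m d 0 ≤ 2 * EE m d ℓ := by
    intro ℓ hℓ
    simp only [Finset.mem_Icc] at hℓ
    exact L8 hm hK (by nlinarith [hℓ.2]) (le_trans hℓ.2 hrle)
  have h1 : r * EE m d 0 = ∑ _ℓ ∈ Finset.Icc 1 r, EE m d 0 := by
    rw [Finset.sum_const, Nat.card_Icc]; simp [mul_comm]
  have h2 : ∑ _ℓ ∈ Finset.Icc 1 r, EE m d 0 ≤ ∑ ℓ ∈ Finset.Icc 1 r, 2 * EE m d ℓ :=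
    Finset.sum_le_sum key
  have h3 : ∑ ℓ ∈ Finset.Icc 1 r, 2 * EE m d ℓ ≤ ∑ ℓ ∈ Finset.Icc 1 d, 2 * EE m d ℓ :=
    Finset.sum_le_sum_of_subset (Finset.Icc_subset_Icc_right hrle)
  have h4 : ∑ ℓ ∈ Finset.Icc 1 d, 2 * EE m d ℓ ≤ (2*m).choose (2*d) := by
    rw [L9 hm hK, ← Finset.mul_sum]
    omega
  omega

/-- tail bound : `N * T ≤ C` -/
lemma tail_bound (N M : ℕ) (hN : 72 ≤ N) (hM1 : 16*N^4 ≤ M)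
    (hMN : N*M ≤ d) (hdlt : d < N*M+N) :
    N * ∑ ℓ ∈ Finset.Icc (2*M+1) d, EE m d ℓ ≤ (2*m).choose (2*d) := by
  set C := (2*m).choose (2*d) with hC
  set T := ∑ ℓ ∈ Finset.Icc (2*M+1) d, EE m d ℓ with hT
  have hNpos : 0 < N := by omega
  have hMpos : 1 ≤ M := by
    have : 0 < N^4 := by positivity
    omega
  have hMd : M ≤ d := by nlinarith
  have hdpos : 0 < d := by omega
  -- step 1 : pointwise
  have step1 : ∀ ℓ ∈ Finset.Icc (2*M+1) d, EE m d ℓ * (d+M)^(M+1) ≤ EE m d 0 * d^(M+1) := by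
    intro ℓ hℓ
    simp only [Finset.mem_Icc] at hℓ
    obtain ⟨j, hj⟩ : ∃ j, ℓ = M + j := ⟨ℓ - M, by omega⟩
    have hgeo := L6 hm hK (M := M) j (by omega)
    rw [← hj] at hgeo
    obtain ⟨e, he⟩ : ∃ e, j = (M+1) + e := ⟨j - (M+1), by omega⟩
    have hsplit1 : (d+M)^j = (d+M)^(M+1) * (d+M)^e := by rw [he, pow_add]
    have hsplit2 : (d:ℕ)^j = d^(M+1) * d^e := by rw [he, pow_add]
    rw [hsplit1, hsplit2] at hgeo
    have h5 : EE m d M * (d^(M+1) * d^e) ≤ EE m d M * d^(M+1) * (d+M)^e := by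
      calc EE m d M * (d^(M+1) * d^e) = (EE m d M * d^(M+1)) * d^e := by ring
        _ ≤ (EE m d M * d^(M+1)) * (d+M)^e := Nat.mul_le_mul_left _ (Nat.pow_le_pow_left (by omega) e)
    have h6 : EE m d ℓ * (d+M)^(M+1) * (d+M)^e ≤ EE m d M * d^(M+1) * (d+M)^e := by
      calc EE m d ℓ * (d+M)^(M+1) * (d+M)^e = EE m d ℓ * ((d+M)^(M+1) * (d+M)^e) := by ring
        _ ≤ EE m d M * (d^(M+1) * d^e) := hgeo
        _ ≤ EE m d M * d^(M+1) * (d+M)^e := h5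
    have h7 : EE m d ℓ * (d+M)^(M+1) ≤ EE m d M * d^(M+1) :=
      Nat.le_of_mul_le_mul_right h6 (by positivity)
    exact le_trans h7 (Nat.mul_le_mul_right _ (L5' hm hK (Nat.zero_le M) hMd))
  -- step 2 : sum
  have step2 : T * (d+M)^(M+1) ≤ d * (EE m d 0 * d^(M+1)) := by
    calc T * (d+M)^(M+1) = ∑ ℓ ∈ Finset.Icc (2*M+1) d, EE m d ℓ * (d+M)^(M+1) := by
          rw [hT, Finset.sum_mul]
      _ ≤ ∑ _ℓ ∈ Finset.Icc (2*M+1) d, EE m d 0 * d^(M+1) := Finset.sum_le_sum step1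
      _ = (Finset.Icc (2*M+1) d).card * (EE m d 0 * d^(M+1)) := by
          rw [Finset.sum_const, smul_eq_mul]
      _ ≤ d * (EE m d 0 * d^(M+1)) := by
          apply Nat.mul_le_mul_right
          rw [Nat.card_Icc]; omega
  -- step 3 : binomial lower bound on (d+M)^(M+1)
  have step3 : d^(M-1) * M^2 * ((M+1).choose 2) ≤ (d+M)^(M+1) := by
    have hexp : (d+M)^(M+1) = ∑ i ∈ Finset.range (M+2), d^i * M^(M+1-i) * ((M+1).choose i) :=
      add_pow d M (M+1)
    have hmem : M-1 ∈ Finset.range (M+2) := by simp; omega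
    have hterm : d^(M-1) * M^(M+1-(M-1)) * ((M+1).choose (M-1))
        ≤ ∑ i ∈ Finset.range (M+2), d^i * M^(M+1-i) * ((M+1).choose i) :=
      Finset.single_le_sum (f := fun i => d^i * M^(M+1-i) * ((M+1).choose i))
        (fun i _ => Nat.zero_le _) hmem
    rw [← hexp] at hterm
    have he : M+1-(M-1) = 2 := by omega
    have hsym : (M+1).choose (M-1) = (M+1).choose 2 := by
      rw [(by omega : M-1 = (M+1)-2)]
      exact Nat.choose_symm (by omega)
    rw [he, hsym] at hterm
    exact hterm
  have hch : M^2 ≤ 2 * ((M+1).choose 2) := by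
    have h1 : (M+1).choose 2 = (M+1)*M/2 := by
      rw [Nat.choose_two_right]; simp
    obtain ⟨t, ht⟩ := Nat.even_mul_succ_self M
    have h2 : (M+1)*M = 2*t := by rw [mul_comm]; omega
    have h3 : M^2 ≤ (M+1)*M := by nlinarith
    rw [h1, h2]
    omega
  -- final chain
  have hE0C : EE m d 0 ≤ C := by
    have := sum_le_C hm hK (y := 0) (by omega)
    simpa using this
  have hd3 : 2*N*(EE m d 0)*d^3 ≤ C*M^4 := by
    have h1 : d ≤ 2*N*M := by nlinarith
    have h2 : d^3 ≤ 8*N^3*M^3 := by nlinarith [pow_le_pow_left₀ (by omega : 0 ≤ d) h1 3]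
    calc 2*N*(EE m d 0)*d^3 ≤ 2*N*(EE m d 0)*(8*N^3*M^3) := Nat.mul_le_mul_left _ h2
      _ = (16*N^4)*(EE m d 0)*M^3 := by ring
      _ ≤ M*(EE m d 0)*M^3 := by
          apply Nat.mul_le_mul_right
          exact Nat.mul_le_mul_right _ hM1
      _ = (EE m d 0)*M^4 := by ring
      _ ≤ C*M^4 := Nat.mul_le_mul_right _ hE0C
  have hMsplit : M+2 = (M-1)+3 := by omega
  have hdpow : (d:ℕ)^(M+2) = d^(M-1)*d^3 := by rw [hMsplit, pow_add]
  have main : N*T*(M^4*d^(M-1)) ≤ C*(M^4*d^(M-1)) := by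
    calc N*T*(M^4*d^(M-1)) = N*T*((M^2*M^2)*d^(M-1)) := by ring
      _ ≤ N*T*(((2*((M+1).choose 2))*M^2)*d^(M-1)) := by
          apply Nat.mul_le_mul_left
          apply Nat.mul_le_mul_right
          exact Nat.mul_le_mul_right _ hch
      _ = 2*N*(T*(d^(M-1) * M^2 * ((M+1).choose 2))) := by ring
      _ ≤ 2*N*(T*(d+M)^(M+1)) := by
          apply Nat.mul_le_mul_left
          exact Nat.mul_le_mul_left _ step3
      _ ≤ 2*N*(d*(EE m d 0 * d^(M+1))) := Nat.mul_le_mul_left _ step2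
      _ = 2*N*(EE m d 0)*d^(M+2) := by rw [(by omega : M+2 = (M+1)+1), pow_succ]; ring
      _ = (2*N*(EE m d 0)*d^3)*d^(M-1) := by rw [hdpow]; ring
      _ ≤ (C*M^4)*d^(M-1) := Nat.mul_le_mul_right _ hd3
      _ = C*(M^4*d^(M-1)) := by ring
  have hpos : 0 < M^4*d^(M-1) := by positivity
  exact Nat.le_of_mul_le_mul_right main hpos
lemma main_ineq (M x : ℕ) (hx : x ≤ d) (hLd : 2*M ≤ d)
    (hBA : 2 * ∑ ℓ ∈ Finset.Icc (x+1) d, ES m d ℓ ≤ 2*K*(AN m d x)) :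
    (2*m).choose (2*d) * (d+1) ≤ 2*(AN m d x)*(d+1) + (2*m).choose (2*d)
      + 10*M*((2*m).choose (2*d)) + 5*(d * ∑ ℓ ∈ Finset.Icc (2*M+1) d, EE m d ℓ) := by
  set C := (2*m).choose (2*d) with hC
  set T := ∑ ℓ ∈ Finset.Icc (2*M+1) d, EE m d ℓ with hT
  set S2 := ∑ ℓ ∈ Finset.Icc (x+1) d, EE m d ℓ with hS2
  set B2 := ∑ ℓ ∈ Finset.Icc (x+1) d, ES m d ℓ with hB2
  set W := ∑ ℓ ∈ Finset.Icc (x+1) d, EE m d ℓ * (1+5*ℓ) with hW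
  have h1 : 2*K*S2*(d+1) ≤ B2*(d+1) + K*W := by
    have hpt : ∀ ℓ ∈ Finset.Icc (x+1) d, 2*K*(EE m d ℓ)*(d+1) ≤ ES m d ℓ*(d+1) + K*(EE m d ℓ*(1+5*ℓ)) := by
      intro ℓ hℓ
      simp only [Finset.mem_Icc] at hℓ
      have := L3 hm hK (ℓ := ℓ) hℓ.2
      linarith [this]
    have hsum := Finset.sum_le_sum hpt
    rw [Finset.sum_add_distrib] at hsum
    have e1 : ∑ ℓ ∈ Finset.Icc (x+1) d, 2*K*(EE m d ℓ)*(d+1) = 2*K*S2*(d+1) := by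
      rw [hS2, Finset.mul_sum, Finset.sum_mul]
    have e2 : ∑ ℓ ∈ Finset.Icc (x+1) d, ES m d ℓ*(d+1) = B2*(d+1) := by
      rw [hB2, Finset.sum_mul]
    have e3 : ∑ ℓ ∈ Finset.Icc (x+1) d, K*(EE m d ℓ*(1+5*ℓ)) = K*W := by
      rw [hW, Finset.mul_sum]
    rw [e1, e2, e3] at hsum
    exact hsum
  have h2 : W ≤ C + 10*M*C + 5*(d*T) := by
    have ha : W = (∑ ℓ ∈ Finset.Icc (x+1) d, EE m d ℓ) + 5*∑ ℓ ∈ Finset.Icc (x+1) d, EE m d ℓ*ℓ := by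
      rw [hW, Finset.mul_sum, ← Finset.sum_add_distrib]
      apply Finset.sum_congr rfl; intros; ring
    have hb : ∑ ℓ ∈ Finset.Icc (x+1) d, EE m d ℓ ≤ C := by
      refine le_trans (Finset.sum_le_sum_of_subset ?_) (sum_le_C hm hK le_rfl)
      intro i hi; simp only [Finset.mem_Icc] at *; omega
    have hc0 : ∑ ℓ ∈ Finset.Icc (x+1) d, EE m d ℓ*ℓ ≤ ∑ ℓ ∈ Finset.Icc 0 d, EE m d ℓ*ℓ := by
      refine Finset.sum_le_sum_of_subset ?_
      intro i hi; simp only [Finset.mem_Icc] at *; omega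
    have hsplit : ∑ ℓ ∈ Finset.Icc 0 d, EE m d ℓ*ℓ
        = (∑ ℓ ∈ Finset.Icc 0 (2*M), EE m d ℓ*ℓ) + ∑ ℓ ∈ Finset.Icc (2*M+1) d, EE m d ℓ*ℓ := by
      have e4 : Finset.Icc 0 d = Finset.Ico 0 (d+1) := by
        ext i; simp only [Finset.mem_Icc, Finset.mem_Ico]; omega
      have e5 : Finset.Icc 0 (2*M) = Finset.Ico 0 (2*M+1) := by
        ext i; simp only [Finset.mem_Icc, Finset.mem_Ico]; omega
      have e6 : Finset.Icc (2*M+1) d = Finset.Ico (2*M+1) (d+1) := by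
        ext i; simp only [Finset.mem_Icc, Finset.mem_Ico]; omega
      rw [e4, e5, e6]
      exact (Finset.sum_Ico_consecutive _ (by omega) (by omega)).symm
    have hc1 : ∑ ℓ ∈ Finset.Icc 0 (2*M), EE m d ℓ*ℓ ≤ 2*M*C := by
      calc ∑ ℓ ∈ Finset.Icc 0 (2*M), EE m d ℓ*ℓ ≤ ∑ ℓ ∈ Finset.Icc 0 (2*M), EE m d ℓ*(2*M) := by
            apply Finset.sum_le_sum
            intro i hi; simp only [Finset.mem_Icc] at hi
            exact Nat.mul_le_mul_left _ hi.2
        _ = (∑ ℓ ∈ Finset.Icc 0 (2*M), EE m d ℓ)*(2*M) := by rw [Finset.sum_mul]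
        _ ≤ C*(2*M) := Nat.mul_le_mul_right _ (sum_le_C hm hK hLd)
        _ = 2*M*C := by ring
    have hc2 : ∑ ℓ ∈ Finset.Icc (2*M+1) d, EE m d ℓ*ℓ ≤ d*T := by
      calc ∑ ℓ ∈ Finset.Icc (2*M+1) d, EE m d ℓ*ℓ ≤ ∑ ℓ ∈ Finset.Icc (2*M+1) d, EE m d ℓ*d := by
            apply Finset.sum_le_sum
            intro i hi; simp only [Finset.mem_Icc] at hi
            exact Nat.mul_le_mul_left _ hi.2
        _ = T*d := by rw [hT, Finset.sum_mul]
        _ = d*T := by ring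
    linarith [ha, hb, hc0, hsplit, hc1, hc2]
  have h3 : AN m d x + 2*S2 = C := A_split hm hK hx
  -- cancel 2K
  have h4 : 2*K*(2*S2*(d+1)) ≤ 2*K*(AN m d x*(d+1) + W) := by
    have hBA' : B2*(d+1) ≤ K*(AN m d x)*(d+1) := by
      have : 2*(B2*(d+1)) ≤ 2*(K*(AN m d x)*(d+1)) := by
        calc 2*(B2*(d+1)) = (2*B2)*(d+1) := by ring
          _ ≤ (2*K*(AN m d x))*(d+1) := Nat.mul_le_mul_right _ hBA
          _ = 2*(K*(AN m d x)*(d+1)) := by ring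
      omega
    calc 2*K*(2*S2*(d+1)) = 2*(2*K*S2*(d+1)) := by ring
      _ ≤ 2*(B2*(d+1) + K*W) := Nat.mul_le_mul_left _ h1
      _ = 2*(B2*(d+1)) + 2*(K*W) := by ring
      _ ≤ 2*(K*(AN m d x)*(d+1)) + 2*(K*W) := by
          have := Nat.mul_le_mul_left 2 hBA'
          omega
      _ = 2*K*(AN m d x*(d+1) + W) := by ring
  have h5 : 2*S2*(d+1) ≤ AN m d x*(d+1) + W :=
    Nat.le_of_mul_le_mul_left h4 (by omega)
  have h6 : C*(d+1) = AN m d x*(d+1) + 2*S2*(d+1) := by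
    rw [← h3]; ring
  linarith [h2, h5, h6]

end core

section realfinal

lemma xzero_absurd (N d C e0 T M : ℝ) (h72 : 72 ≤ N) (hC1 : 1 ≤ C) (hd1 : 1 ≤ d)
    (he0 : 0 ≤ e0) (hT0 : 0 ≤ T) (hM0 : 0 ≤ M)
    (q1 : C*(d+1) ≤ 2*e0*(d+1) + C + 10*M*C + 5*(d*T))
    (q2 : N*T ≤ C) (q3 : N*e0 ≤ C) (q4 : N*M ≤ d) (q5 : N ≤ C) : False := by
  have hN0 : (0:ℝ) ≤ N := by linarith
  have hC0 : (0:ℝ) ≤ C := by linarith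
  have hd0 : (0:ℝ) ≤ d := by linarith
  have m1 : N*(C*(d+1)) ≤ N*(2*e0*(d+1) + C + 10*M*C + 5*(d*T)) :=
    mul_le_mul_of_nonneg_left q1 hN0
  have m3 : (N*e0)*(d+1) ≤ C*(d+1) := mul_le_mul_of_nonneg_right q3 (by linarith)
  have m4 : (N*M)*C ≤ d*C := mul_le_mul_of_nonneg_right q4 hC0
  have m5 : d*(N*T) ≤ d*C := mul_le_mul_of_nonneg_left q2 hd0
  have m6 : 72*(C*d) ≤ N*(C*d) := mul_le_mul_of_nonneg_right h72 (by positivity)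
  have m7 : C*1 ≤ C*d := mul_le_mul_of_nonneg_left hd1 hC0
  nlinarith [m1, m3, m4, m5, m6, m7, q5, hC1]

lemma final_bounds (ε N d C e0 ex T M A A' Q : ℝ)
    (h72 : 72 ≤ N) (hεN : 36 ≤ ε*N) (hNd : N ≤ d) (hC1 : 1 ≤ C)
    (he0 : 0 ≤ e0) (hT0 : 0 ≤ T) (hM0 : 0 ≤ M) (hA'0 : 0 ≤ A')
    (r1 : C*(d+1) ≤ 2*A*(d+1) + C + 10*M*C + 5*(d*T))
    (r2 : N*T ≤ C) (r3 : N*e0 ≤ C) (r4 : N*M ≤ d) (r5 : N ≤ C)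
    (r9 : A = A' + 2*ex) (r9' : ex ≤ e0) (r9'' : 0 ≤ ex)
    (r10 : A' - 1 ≤ Q) (r11 : Q ≤ A') (r12 : 2*A' ≤ C) :
    (1 - ε) * (C/2) ≤ Q ∧ Q ≤ (1 + ε) * (C/2) := by
  have hN0 : (0:ℝ) < N := by linarith
  have hε0 : 0 < ε := by nlinarith
  have hC0 : (0:ℝ) ≤ C := by linarith
  have hd0 : (0:ℝ) ≤ d := by linarith
  constructor
  · have h10 : N*(C*(d+1)) ≤ N*(2*A*(d+1) + C + 10*M*C + 5*(d*T)) :=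
      mul_le_mul_of_nonneg_left r1 (le_of_lt hN0)
    have h11 : (N*M)*C ≤ d*C := mul_le_mul_of_nonneg_right r4 hC0
    have h12 : d*(N*T) ≤ d*C := mul_le_mul_of_nonneg_left r2 hd0
    have h13 : N*C ≤ d*C := mul_le_mul_of_nonneg_right hNd hC0
    have h15 : 36*(C*(d+1)) ≤ (ε*N)*(C*(d+1)) :=
      mul_le_mul_of_nonneg_right hεN (by positivity)
    have h16 : (N*e0)*(d+1) ≤ C*(d+1) := mul_le_mul_of_nonneg_right r3 (by linarith)
    have h17 : N*(d+1) ≤ C*(d+1) := mul_le_mul_of_nonneg_right r5 (by linarith)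
    have r9n : (N*ex)*(d+1) ≤ (N*e0)*(d+1) :=
      mul_le_mul_of_nonneg_right
        (mul_le_mul_of_nonneg_left r9' (le_of_lt hN0)) (by linarith)
    have hkey : (N*(d+1))*((1-ε)*C) ≤ (N*(d+1))*(2*A' - 2) := by
      have hsub : N*(2*A*(d+1)) = 2*N*A'*(d+1) + 4*((N*ex)*(d+1)) := by rw [r9]; ring
      nlinarith [h10, h11, h12, h13, h15, h16, h17, r9n, hsub]
    have hpos : (0:ℝ) < N*(d+1) := by nlinarith
    have hfin : (1-ε)*C ≤ 2*A' - 2 := le_of_mul_le_mul_left hkey hpos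
    linarith
  · nlinarith [r11, r12, mul_nonneg (le_of_lt hε0) hC0]

end realfinal

section assembly

lemma MMS_eq (k d K : ℕ) (hk : k = 2*K+1) (hK : 1 ≤ K) (hd : 1 ≤ d) :
    MMS ((2*d+1)*k-1) k = (((2*((2*d+1)*K+d)).choose (2*d) : ℝ))/2 := by
  set n := (2*d+1)*k-1 with hn
  set m := (2*d+1)*K+d with hmdef
  have hxx : (2*d+1)*k = 2*((2*d+1)*K+d)+1 := by rw [hk]; ring
  have hnm : n = 2*m := by rw [hn, hmdef]; omega
  have hyy : (2*d+1)*k = 2*d*k + k := by ring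
  have h1 : n / k = 2*d := by
    rw [show n = (k-1) + 2*d*k by omega, Nat.add_mul_div_right _ _ (by omega : 0 < k),
      Nat.div_eq_of_lt (by omega)]
    omega
  have h2 : n % k = k-1 := by
    rw [show n = (k-1) + 2*d*k by omega, Nat.add_mul_mod_self_right]
    exact Nat.mod_eq_of_lt (by omega)
  have h3 : n.choose (n/k) = (2*m).choose (2*d) := by rw [h1, hnm]
  unfold MMS
  rw [h3, h1, h2]
  have hc1 : ((k-1 : ℕ) : ℝ) = (k:ℝ) - 1 := by
    have : (1:ℕ) ≤ k := by omega
    push_cast [this]; ring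
  have hc2 : ((n:ℕ):ℝ) - ((2*d : ℕ):ℝ) = ((2*d+1):ℝ)*((k:ℝ)-1) := by
    have hk1 : k - 1 = 2*K := by omega
    have hzz : (2*d+1)*(k-1) = 2*((2*d+1)*K) := by rw [hk1]; ring
    have : (n:ℕ) = 2*d + (2*d+1)*(k-1) := by omega
    rw [this]
    have h1k : (1:ℕ) ≤ k := by omega
    push_cast [h1k]
    ring
  rw [hc1, hc2]
  have hknz : (k:ℝ) - 1 ≠ 0 := by
    have : (3:ℕ) ≤ k := by omega
    have : (3:ℝ) ≤ (k:ℝ) := by exact_mod_cast this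
    linarith
  have hdnz : ((2*d+1):ℝ) ≠ 0 := by positivity
  have hden : (k:ℝ) - ((k:ℝ)-1) + ((k:ℝ)-1) * (((2*d:ℕ):ℝ) + 1) / (((2*d+1):ℝ)*((k:ℝ)-1)) = 2 := by
    have : (((2*d:ℕ)):ℝ) + 1 = ((2*d+1):ℝ) := by push_cast; ring
    rw [this]
    field_simp
    ring
  rw [hden]

set_option maxHeartbeats 4000000 in
theorem per_kd (ε : ℝ) (N : ℕ) (hN : 72 ≤ N) (hεN : 36 ≤ ε * (N:ℝ)) (k d K : ℕ)
    (hk : k = 2*K+1) (hK : 1 ≤ K) (hd : 16*N^5 + 9*N^2 + 100*N + 100 ≤ d)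
    (u Q : ℤ)
    (hu : IsGreatest {x : ℤ | -1 ≤ x ∧ x ≤ (d : ℤ) - 1 ∧
        ((k : ℤ) - 1) * aF ((2 * d + 1) * k - 1) d x ≤ bF ((2 * d + 1) * k - 1) d x} u)
    (hQ : (Even (aF ((2 * d + 1) * k - 1) d u) ∧ Q = aF ((2 * d + 1) * k - 1) d u) ∨
        (¬ Even (aF ((2 * d + 1) * k - 1) d u) ∧ Q = aF ((2 * d + 1) * k - 1) d u - 1)) :
    (1 - ε) * MMS ((2 * d + 1) * k - 1) k ≤ (Q : ℝ) ∧
        (Q : ℝ) ≤ (1 + ε) * MMS ((2 * d + 1) * k - 1) k := by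
  set n := (2*d+1)*k-1 with hn
  set m := (2*d+1)*K+d with hmdef
  have hm : m = (2*d+1)*K + d := hmdef
  have hxx : (2*d+1)*k = 2*((2*d+1)*K+d)+1 := by rw [hk]; ring
  have hnm : n = 2*m := by rw [hn, hmdef]; omega
  have hhalf : n / 2 = m := by omega
  have hdd : 1 ≤ d := by
    have h1 : 0 < N^5 := pow_pos (by omega) 5
    omega
  have hee : ∀ ℓ, ee n d ℓ = EE m d ℓ := by
    intro ℓ; unfold ee EE; rw [hhalf]
  have hes : ∀ ℓ, es n d ℓ = ES m d ℓ := by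
    intro ℓ; unfold es ES; rw [hhalf]
  have hAFc : ∀ x : ℤ, 0 ≤ x → aF n d x = (AN m d x.toNat : ℤ) := by
    intro x hx
    simp only [aF, if_neg (not_lt.mpr hx), AN]
    push_cast
    simp only [hee]
  have hBFc : ∀ x : ℤ, 0 ≤ x →
      bF n d x = 2 * ((∑ ℓ ∈ Finset.Icc (x.toNat+1) d, ES m d ℓ : ℕ) : ℤ) := by
    intro x hx
    simp only [bF, if_neg (not_lt.mpr hx)]
    push_cast
    simp only [hes]
  have hk2 : (k:ℤ) - 1 = 2*K := by rw [hk]; push_cast; ring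
  set C := (2*m).choose (2*d) with hC
  have hC1 : 1 ≤ C := Nat.choose_pos (by omega)
  have hE0pos := E0_pos hm hK
  obtain ⟨⟨hu1, hu2, hu3⟩, hub⟩ := hu
  -- exclude u = d-1
  have hune : u ≠ (d:ℤ) - 1 := by
    intro heq
    have h0le : (0:ℤ) ≤ (d:ℤ)-1 := by
      have : (1:ℕ) ≤ d := hdd
      omega
    rw [heq, hAFc _ h0le, hBFc _ h0le] at hu3
    have htn : ((d:ℤ)-1).toNat = d-1 := by omega
    rw [htn, hk2] at hu3
    have hIcc : Finset.Icc (d-1+1) d = {d} := by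
      rw [(by omega : d-1+1 = d)]
      exact Finset.Icc_self d
    rw [hIcc, Finset.sum_singleton] at hu3
    -- ℕ contradiction
    have hd2 : 2 ≤ d := by
      have h1 : 0 < N^5 := pow_pos (by omega) 5
      omega
    have hnat : (2:ℤ)*K * (AN m d (d-1)) ≤ 2 * (ES m d d) := by linarith [hu3]
    have hnat' : 2*K * AN m d (d-1) ≤ 2 * ES m d d := by exact_mod_cast hnat
    have hES : ES m d d ≤ 2*K*EE m d d := L2 hm hK le_rfl
    have hEd : EE m d d ≤ EE m d 1 := L5' hm hK (by omega) le_rfl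
    have hA1 : EE m d 0 + 2*EE m d 1 ≤ AN m d (d-1) := by
      unfold AN
      have : EE m d 1 ≤ ∑ ℓ ∈ Finset.Icc 1 (d-1), EE m d ℓ :=
        Finset.single_le_sum (f := fun ℓ => EE m d ℓ) (fun i _ => Nat.zero_le _)
          (by simp [Finset.mem_Icc]; omega)
      omega
    have c1 : 2*K*(EE m d 0 + 2*EE m d 1) ≤ 2*K*AN m d (d-1) := Nat.mul_le_mul_left _ hA1
    have c2 : 2*ES m d d ≤ 2*(2*K*EE m d d) := Nat.mul_le_mul_left _ hES
    have c3 : 2*K*EE m d d ≤ 2*K*EE m d 1 := Nat.mul_le_mul_left _ hEd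
    have c4 : 2*K*(EE m d 0 + 2*EE m d 1) = 2*K*EE m d 0 + 2*(2*K*EE m d 1) := by ring
    have c5 : 0 < 2*K*EE m d 0 := Nat.mul_pos (by omega) hE0pos
    linarith only [hnat', c1, c2, c3, c4, c5]
  have hu2' : u ≤ (d:ℤ) - 2 := by
    rcases lt_or_eq_of_le hu2 with h | h
    · omega
    · exact absurd h hune
  -- failure at x = u+1
  set x : ℤ := u + 1 with hxdef
  have hxS : ¬(-1 ≤ x ∧ x ≤ (d:ℤ)-1 ∧ ((k:ℤ)-1) * aF n d x ≤ bF n d x) := by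
    intro hmem
    have := hub hmem
    omega
  have hx1 : -1 ≤ x := by omega
  have hx2 : x ≤ (d:ℤ)-1 := by omega
  have hx0 : 0 ≤ x := by omega
  have hfail : ¬(((k:ℤ)-1) * aF n d x ≤ bF n d x) := by
    intro hcon
    exact hxS ⟨hx1, hx2, hcon⟩
  set xN := x.toNat with hxN
  have hxNd : xN ≤ d := by omega
  have hfailN : 2 * ∑ ℓ ∈ Finset.Icc (xN+1) d, ES m d ℓ < 2*K*(AN m d xN) := by
    rw [hAFc _ hx0, hBFc _ hx0, hk2] at hfail
    have := lt_of_not_ge hfail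
    exact_mod_cast this
  have hBA : 2 * ∑ ℓ ∈ Finset.Icc (xN+1) d, ES m d ℓ ≤ 2*K*(AN m d xN) := le_of_lt hfailN
  -- M and friends
  set M := d / N with hMdef
  have hdm := Nat.div_add_mod d N
  have hmod : d % N < N := Nat.mod_lt _ (by omega)
  have hMN : N*M ≤ d := by rw [hMdef]; omega
  have hdlt : d < N*M + N := by rw [hMdef]; omega
  have hM1 : 16*N^4 ≤ M := by
    rw [hMdef, Nat.le_div_iff_mul_le (by omega : 0 < N)]
    have : 16*N^4*N = 16*N^5 := by ring
    omega
  have hL : 2*M ≤ d := by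
    have : 2*M ≤ N*M := Nat.mul_le_mul_right M (by omega)
    omega
  have main := main_ineq hm hK M xN hxNd hL hBA
  have tail := tail_bound hm hK N M hN hM1 hMN hdlt
  set T := ∑ ℓ ∈ Finset.Icc (2*M+1) d, EE m d ℓ with hT
  -- E0 bound
  have hsq : 3*N ≤ d.sqrt := by
    have h9 : (3*N)^2 ≤ d := by
      have : (3*N)^2 = 9*N^2 := by ring
      omega
    calc 3*N = Nat.sqrt ((3*N)^2) := (Nat.sqrt_eq' (3*N)).symm
      _ ≤ d.sqrt := Nat.sqrt_le_sqrt h9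
  have hrN : N ≤ d.sqrt / 3 := by omega
  have cent := central_bound hm hK hdd
  have hE0C : N * EE m d 0 ≤ C := le_trans (Nat.mul_le_mul_right _ hrN) cent
  have hNC : N ≤ C := by
    have : N*1 ≤ N*EE m d 0 := Nat.mul_le_mul_left N hE0pos
    omega
  -- exclude xN = 0
  have hxN1 : 1 ≤ xN := by
    by_contra hcon
    have hxz : xN = 0 := by omega
    rw [hxz] at main
    have hAN0 : AN m d 0 = EE m d 0 := by
      unfold AN; simp
    rw [hAN0] at main
    refine xzero_absurd (N:ℝ) (d:ℝ) ((C:ℕ):ℝ) ((EE m d 0 : ℕ):ℝ) ((T:ℕ):ℝ) ((M:ℕ):ℝ)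
      (by exact_mod_cast hN) (by exact_mod_cast hC1) (by exact_mod_cast hdd)
      (by positivity) (by positivity) (by positivity)
      (by exact_mod_cast main) (by exact_mod_cast tail) (by exact_mod_cast hE0C)
      (by exact_mod_cast hMN) (by exact_mod_cast hNC)
  have hu0 : 0 ≤ u := by omega
  set uN := u.toNat with huN
  have huxN : xN = uN + 1 := by omega
  have huNd : uN ≤ d := by omega
  -- A uN vs A xN
  have hstep : AN m d xN = AN m d uN + 2*EE m d xN := by
    rw [huxN]
    unfold AN
    rw [Finset.sum_Icc_succ_top (by omega : 1 ≤ uN+1)]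
    ring
  have hExE0 : EE m d xN ≤ EE m d 0 := L5' hm hK (Nat.zero_le _) hxNd
  -- upper bound : 2 * AN uN ≤ C
  have hsucc : ((k:ℤ)-1) * aF n d u ≤ bF n d u := hu3
  rw [hAFc _ hu0, hBFc _ hu0, hk2] at hsucc
  have hsuccN : 2*K*(AN m d uN) ≤ 2 * ∑ ℓ ∈ Finset.Icc (uN+1) d, ES m d ℓ := by
    exact_mod_cast hsucc
  have hESsum : ∑ ℓ ∈ Finset.Icc (uN+1) d, ES m d ℓ ≤ 2*K*∑ ℓ ∈ Finset.Icc (uN+1) d, EE m d ℓ := by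
    rw [Finset.mul_sum]
    apply Finset.sum_le_sum
    intro i hi
    simp only [Finset.mem_Icc] at hi
    exact L2 hm hK hi.2
  have hAsplit := A_split hm hK huNd
  have hupper : 2 * AN m d uN ≤ C := by
    have h1 : 2*K*(AN m d uN) ≤ 2*K*(2*∑ ℓ ∈ Finset.Icc (uN+1) d, EE m d ℓ) := by
      calc 2*K*(AN m d uN) ≤ 2 * ∑ ℓ ∈ Finset.Icc (uN+1) d, ES m d ℓ := hsuccN
        _ ≤ 2 * (2*K*∑ ℓ ∈ Finset.Icc (uN+1) d, EE m d ℓ) := by omega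
        _ = 2*K*(2*∑ ℓ ∈ Finset.Icc (uN+1) d, EE m d ℓ) := by ring
    have h2 : AN m d uN ≤ 2*∑ ℓ ∈ Finset.Icc (uN+1) d, EE m d ℓ :=
      Nat.le_of_mul_le_mul_left h1 (by omega)
    omega
  -- Q vs AN uN
  have haFu : aF n d u = (AN m d uN : ℤ) := hAFc _ hu0
  have hQle : Q ≤ (AN m d uN : ℤ) := by
    rcases hQ with ⟨_, hQe⟩ | ⟨_, hQe⟩ <;> rw [hQe, haFu] <;> omega
  have hQge : (AN m d uN : ℤ) - 1 ≤ Q := by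
    rcases hQ with ⟨_, hQe⟩ | ⟨_, hQe⟩ <;> rw [hQe, haFu] <;> omega
  -- to the reals
  have hMMS : MMS ((2*d+1)*k-1) k = ((C:ℕ):ℝ)/2 := MMS_eq k d K hk hK hdd
  rw [hMMS]
  apply final_bounds ε (N:ℝ) (d:ℝ) ((C:ℕ):ℝ) ((EE m d 0 : ℕ):ℝ) ((EE m d xN : ℕ):ℝ)
    ((T:ℕ):ℝ) ((M:ℕ):ℝ) ((AN m d xN : ℕ):ℝ) ((AN m d uN : ℕ):ℝ) (Q:ℝ)
  · exact_mod_cast hN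
  · exact hεN
  · have : N ≤ d := by omega
    exact_mod_cast this
  · exact_mod_cast hC1
  · positivity
  · positivity
  · positivity
  · positivity
  · exact_mod_cast main
  · exact_mod_cast tail
  · exact_mod_cast hE0C
  · exact_mod_cast hMN
  · exact_mod_cast hNC
  · exact_mod_cast hstep
  · exact_mod_cast hExE0
  · positivity
  · exact_mod_cast hQge
  · exact_mod_cast hQle
  · exact_mod_cast hupper

end assembly


/-- Lemma 15(d): `Q ∼ MMS(n,k)` as `n = (2d+1)k - 1 → ∞` with `k = o(n)` and `k ≥ 3`
odd, where `Q = a(u)` if `a(u)` is even and `Q = a(u) - 1` otherwise. -/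
theorem Q_asymptotic_k_sub_one (ε : ℝ) (hε : 0 < ε) :
    ∃ D : ℕ, ∀ k d : ℕ, Odd k → 3 ≤ k → D ≤ d → ∀ u Q : ℤ,
      IsGreatest {x : ℤ | -1 ≤ x ∧ x ≤ (d : ℤ) - 1 ∧
        ((k : ℤ) - 1) * aF ((2 * d + 1) * k - 1) d x ≤ bF ((2 * d + 1) * k - 1) d x} u →
      ((Even (aF ((2 * d + 1) * k - 1) d u) ∧ Q = aF ((2 * d + 1) * k - 1) d u) ∨
        (¬ Even (aF ((2 * d + 1) * k - 1) d u) ∧ Q = aF ((2 * d + 1) * k - 1) d u - 1)) →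
      (1 - ε) * MMS ((2 * d + 1) * k - 1) k ≤ (Q : ℝ) ∧
        (Q : ℝ) ≤ (1 + ε) * MMS ((2 * d + 1) * k - 1) k := by
  set N : ℕ := ⌈(36:ℝ)/ε⌉₊ + 72 with hNdef
  refine ⟨16*N^5 + 9*N^2 + 100*N + 100, ?_⟩
  intro k d hodd hk3 hDd u Q hu hQ
  obtain ⟨K, hkK⟩ := hodd
  have hk : k = 2*K + 1 := hkK
  have hK : 1 ≤ K := by omega
  have hN72 : 72 ≤ N := by omega
  have hεN : 36 ≤ ε * (N:ℝ) := by
    have h1 : (36:ℝ)/ε ≤ (⌈(36:ℝ)/ε⌉₊ : ℕ) := Nat.le_ceil _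
    have h2 : ((⌈(36:ℝ)/ε⌉₊ : ℕ) : ℝ) ≤ (N:ℝ) := by
      rw [hNdef]; push_cast; linarith
    have h3 : (36:ℝ)/ε ≤ (N:ℝ) := le_trans h1 h2
    calc (36:ℝ) = ε * ((36:ℝ)/ε) := by field_simp
      _ ≤ ε * (N:ℝ) := mul_le_mul_of_nonneg_left h3 (le_of_lt hε)
  exact per_kd ε N hN72 hεN k d K hk hK hDd u Q hu hQ
end
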